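/- arXiv:1906.09158 — 3 statements merged into one kernel-verified Lean document; each statement's English description precedes it below -/
import Mathlib

section
/- Let O be a point, α ∈ (0, π/2), and let C, C' be points with angle ∠C O C' = α. The circumcenter of triangle O C C' lies strictly inside the angular sector bounded by rays OC and OC' if and only if |OC|·cos α < |OC'| < |OC|/cos α. -/
open Real EuclideanGeometry

open RealInnerProductSpace

private lemma inner_re' (w z : ℂ) : ⟪w, z⟫ = w.re * z.re + w.im * z.im := by
  rw [Complex.inner]; simp [Complex.mul_re]; ring

private lemma norm_sq_re' (z : ℂ) : ‖z‖^2 = z.re^2 + z.im^2 := by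
  rw [Complex.sq_norm, Complex.normSq_apply]; ring

set_option maxHeartbeats 2000000 in
/-- Let `O`, `C`, `C'` be points of the Euclidean plane `ℂ` with
`O ≠ C`, `O ≠ C'`, and angle `∠C O C' = α`, `0 < α < π/2`.  The circumcenter
`V` of triangle `O C C'` (the point equidistant from `O`, `C`, `C'`) lies
strictly inside the open angular sector bounded by the rays `OC` and `OC'`
(the set `{O + s(C−O) + t(C'−O) : s > 0, t > 0}`) if and only if
`|OC|·cos α < |OC'| < |OC| / cos α`. -/
theorem circumcenter_in_sector_iff
    (O C C' V : ℂ) (α : ℝ)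
    (hC : O ≠ C) (hC' : O ≠ C')
    (hα₀ : 0 < α) (hα₁ : α < π / 2)
    (hangle : EuclideanGeometry.angle C O C' = α)
    (hV : dist V O = dist V C ∧ dist V O = dist V C') :
    (∃ s t : ℝ, 0 < s ∧ 0 < t ∧ V = O + (s : ℂ) * (C - O) + (t : ℂ) * (C' - O)) ↔
      (dist O C * Real.cos α < dist O C' ∧ dist O C' < dist O C / Real.cos α) := by
  set u : ℂ := C - O with hu
  set v : ℂ := C' - O with hv
  have hu0 : u ≠ 0 := sub_ne_zero.2 (Ne.symm hC)
  have hv0 : v ≠ 0 := sub_ne_zero.2 (Ne.symm hC')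
  set a : ℝ := ‖u‖ with ha
  set b : ℝ := ‖v‖ with hb
  have ha0 : 0 < a := norm_pos_iff.2 hu0
  have hb0 : 0 < b := norm_pos_iff.2 hv0
  set c : ℝ := Real.cos α with hc
  have hc0 : 0 < c := Real.cos_pos_of_mem_Ioo ⟨by linarith [Real.pi_pos], hα₁⟩
  have hc1 : c < 1 := by
    have := Real.cos_lt_cos_of_nonneg_of_le_pi le_rfl (by linarith [Real.pi_pos]) hα₀
    simpa using this
  have hcc : 0 < 1 - c^2 := by nlinarith
  have hdC : dist O C = a := by rw [dist_eq_norm, ← norm_neg]; congr 1; rw [hu]; ring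
  have hdC' : dist O C' = b := by rw [dist_eq_norm, ← norm_neg]; congr 1; rw [hv]; ring
  have hA : u.re^2 + u.im^2 = a^2 := (norm_sq_re' u).symm
  have hB : v.re^2 + v.im^2 = b^2 := (norm_sq_re' v).symm
  -- inner product value
  have hang2 : InnerProductGeometry.angle u v = α := by
    rw [← hangle, EuclideanGeometry.angle]; simp [vsub_eq_sub, hu, hv]
  have hinner : u.re * v.re + u.im * v.im = a * b * c := by
    have h : Real.cos (InnerProductGeometry.angle u v) = ⟪u, v⟫ / (‖u‖ * ‖v‖) :=
      InnerProductGeometry.cos_angle u v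
    rw [hang2, inner_re', ← ha, ← hb] at h
    field_simp [hc] at h
    linarith [h]
  -- distance conditions as inner products
  have key : ∀ P : ℂ, dist V O = dist V P →
      (V - O).re * (P - O).re + (V - O).im * (P - O).im = ‖P - O‖^2 / 2 := by
    intro P h
    have h2 : ‖V - O‖^2 = ‖(V - O) - (P - O)‖^2 := by
      simp only [dist_eq_norm] at h
      have h3 : V - O - (P - O) = V - P := by ring
      rw [h3, ← h]
    rw [norm_sq_re', norm_sq_re'] at h2
    simp only [Complex.sub_re, Complex.sub_im] at h2 ⊢
    rw [norm_sq_re']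
    simp only [Complex.sub_re, Complex.sub_im]
    linear_combination h2 / 2
  have E1 : (V - O).re * u.re + (V - O).im * u.im = a^2 / 2 := by
    have := key C hV.1; rwa [← hu, ← ha] at this
  have E2 : (V - O).re * v.re + (V - O).im * v.im = b^2 / 2 := by
    have := key C' hV.2; rwa [← hv, ← hb] at this
  rw [hdC, hdC']
  clear key hV hangle hang2 hdC hdC' hu hv hu0 hv0 hC hC' hc hα₀ hα₁ ha hb
  clear_value a b c
  constructor
  · rintro ⟨s, t, hs, ht, hVeq⟩
    have hw : V - O = (s : ℂ) * u + (t : ℂ) * v := by rw [hVeq]; ring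
    have hwre : (V - O).re = s * u.re + t * v.re := by
      rw [hw]; simp [Complex.add_re, Complex.mul_re]
    have hwim : (V - O).im = s * u.im + t * v.im := by
      rw [hw]; simp [Complex.add_im, Complex.mul_im]
    rw [hwre, hwim] at E1 E2
    have e1 : s * a^2 + t * (a*b*c) = a^2 / 2 := by linear_combination E1 - s * hA - t * hinner
    have e2 : s * (a*b*c) + t * b^2 = b^2 / 2 := by linear_combination E2 - t * hB - s * hinner
    have h1 : a*b*(b - a*c) = 2*t*(a*b^2)*(1-c^2) := by linear_combination 2*b*c*e1 - 2*a*e2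
    have h2 : a*b*(a - b*c) = 2*s*(a^2*b)*(1-c^2) := by linear_combination 2*a*c*e2 - 2*b*e1
    have hp1 : 0 < 2*t*(a*b^2)*(1-c^2) := by positivity
    have hp2 : 0 < 2*s*(a^2*b)*(1-c^2) := by positivity
    constructor
    · nlinarith [mul_pos ha0 hb0]
    · rw [lt_div_iff₀ hc0]; nlinarith [mul_pos ha0 hb0]
  · rintro ⟨h1, h2⟩
    rw [lt_div_iff₀ hc0] at h2
    set s : ℝ := (a - b*c)/(2*a*(1-c^2)) with hs_def
    set t : ℝ := (b - a*c)/(2*b*(1-c^2)) with ht_def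
    have hs : 0 < s := div_pos (by linarith) (by positivity)
    have ht : 0 < t := div_pos (by linarith) (by positivity)
    refine ⟨s, t, hs, ht, ?_⟩
    -- the candidate point has the same inner products
    have F1 : (s * u.re + t * v.re) * u.re + (s * u.im + t * v.im) * u.im = a^2 / 2 := by
      have : s * a^2 + t * (a*b*c) = a^2 / 2 := by
        rw [hs_def, ht_def]; field_simp; ring
      linear_combination this + s * hA + t * hinner
    have F2 : (s * u.re + t * v.re) * v.re + (s * u.im + t * v.im) * v.im = b^2 / 2 := by
      have : s * (a*b*c) + t * b^2 = b^2 / 2 := by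
        rw [hs_def, ht_def]; field_simp; ring
      linear_combination this + t * hB + s * hinner
    -- determinant nonzero
    have hD : (u.re * v.im - u.im * v.re)^2 = a^2*b^2*(1-c^2) := by
      linear_combination (v.re^2 + v.im^2) * hA + a^2 * hB
        - (u.re*v.re + u.im*v.im + a*b*c) * hinner
    have hD0 : u.re * v.im - u.im * v.re ≠ 0 := by
      intro h
      rw [h] at hD
      nlinarith [mul_pos (mul_pos (pow_pos ha0 2) (pow_pos hb0 2)) hcc]
    set x : ℝ := (V - O).re - (s * u.re + t * v.re) with hx_def
    set y : ℝ := (V - O).im - (s * u.im + t * v.im) with hy_def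
    have hx : x * u.re + y * u.im = 0 := by rw [hx_def, hy_def]; linear_combination E1 - F1
    have hy : x * v.re + y * v.im = 0 := by rw [hx_def, hy_def]; linear_combination E2 - F2
    have hx0 : x = 0 := by
      have : x * (u.re * v.im - u.im * v.re) = 0 := by linear_combination v.im * hx - u.im * hy
      rcases mul_eq_zero.1 this with h | h
      · exact h
      · exact absurd h hD0
    have hy0 : y = 0 := by
      have : y * (u.re * v.im - u.im * v.re) = 0 := by linear_combination u.re * hy - v.re * hx
      rcases mul_eq_zero.1 this with h | h
      · exact h
      · exact absurd h hD0
    rw [hx_def] at hx0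
    rw [hy_def] at hy0
    apply Complex.ext
    · simp only [Complex.add_re, Complex.mul_re, Complex.ofReal_re, Complex.ofReal_im,
        Complex.sub_re] at hx0 ⊢
      linarith [hx0]
    · simp only [Complex.add_im, Complex.mul_im, Complex.ofReal_re, Complex.ofReal_im,
        Complex.sub_im] at hy0 ⊢
      linarith [hy0]
end

section
/- Conversely to the regular case: if a convex polygon V₀,...,V_{n-1} (n ≥ 3) is such that its edges are perpendicular bisectors of segments O C_i, all the points C_i are at the same distance from O, and consecutive angles ∠C_i O C_{i+1} are all equal, then the polygon V₀,...,V_{n-1} is regular and O is its center. -/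
open Real EuclideanGeometry

lemma key0 (r β : ℝ) (hr : 0 < r) (hβ0 : 0 < β) (hβπ : β < π) (t : ℂ)
    (h1 : ‖t‖ = ‖t - r‖)
    (h2 : ‖t‖ = ‖t - r * Complex.exp ((β:ℂ) * Complex.I)‖) :
    t = ((r / (2 * Real.cos (β/2)) : ℝ) : ℂ) * Complex.exp (((β/2 : ℝ):ℂ) * Complex.I) := by
  have hc : 0 < Real.cos (β/2) := Real.cos_pos_of_mem_Ioo ⟨by linarith, by linarith⟩
  have hs2 : 0 < Real.sin (β/2) := Real.sin_pos_of_pos_of_lt_pi (by linarith) (by linarith)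
  have e1 : Complex.normSq t = Complex.normSq (t - r) := by
    rw [← Complex.sq_norm, ← Complex.sq_norm, h1]
  have e2 : Complex.normSq t
      = Complex.normSq (t - ((Real.cos β : ℂ) + (Real.sin β : ℂ) * Complex.I) * r) := by
    rw [← Complex.sq_norm, ← Complex.sq_norm, h2]
    ring_nf
    rw [Complex.exp_mul_I, ← Complex.ofReal_cos, ← Complex.ofReal_sin]
    ring_nf
  simp [Complex.normSq_apply, Complex.sub_re, Complex.sub_im, Complex.add_re, Complex.add_im,
    Complex.mul_re, Complex.mul_im, Complex.cos_ofReal_re, Complex.sin_ofReal_re] at e1 e2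
  have ha : t.re = r / 2 := by nlinarith [e1]
  have hlin : r * Real.cos β + 2 * t.im * Real.sin β = r := by
    have h0 : r * (r * Real.cos β + 2 * t.im * Real.sin β - r) = 0 := by
      linear_combination e2 + r^2 * Real.sin_sq_add_cos_sq β - 2*Real.cos β*r*ha
    rcases mul_eq_zero.1 h0 with h | h
    · exact absurd h hr.ne'
    · linarith
  have hsin2 : Real.sin β = 2 * Real.sin (β/2) * Real.cos (β/2) := by
    have := Real.sin_two_mul (β/2); rw [show 2 * (β/2) = β by ring] at this; linarith
  have hcos2 : Real.cos β = 2 * Real.cos (β/2)^2 - 1 := by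
    have := Real.cos_two_mul (β/2); rw [show 2 * (β/2) = β by ring] at this; linarith
  have hpyth : Real.sin (β/2)^2 + Real.cos (β/2)^2 = 1 := Real.sin_sq_add_cos_sq _
  have hbc : 2 * t.im * Real.cos (β/2) = r * Real.sin (β/2) := by
    have h0 : 2 * Real.sin (β/2) * (2 * t.im * Real.cos (β/2) - r * Real.sin (β/2)) = 0 := by
      linear_combination hlin - 2*t.im*hsin2 - r*hcos2 - 2*r*hpyth
    rcases mul_eq_zero.1 h0 with h | h
    · nlinarith
    · linarith
  apply Complex.ext
  · rw [Complex.mul_re, Complex.ofReal_re, Complex.ofReal_im,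
      Complex.exp_ofReal_mul_I_re, Complex.exp_ofReal_mul_I_im, ha]
    field_simp
    ring
  · rw [Complex.mul_im, Complex.ofReal_re, Complex.ofReal_im,
      Complex.exp_ofReal_mul_I_re, Complex.exp_ofReal_mul_I_im]
    field_simp
    linarith [hbc]


lemma exp_mod0 (n : ℕ) (hn : n ≠ 0) (θ₀ : ℝ) (m : ℕ) :
    Complex.exp (((θ₀ + 2 * π * ((m % n : ℕ) : ℕ) / n : ℝ) : ℂ) * Complex.I)
      = Complex.exp (((θ₀ + 2 * π * m / n : ℝ) : ℂ) * Complex.I) := by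
  have hn' : (n : ℝ) ≠ 0 := Nat.cast_ne_zero.2 hn
  obtain ⟨k, hk⟩ : ∃ k : ℕ, m % n + n * k = m := ⟨m / n, Nat.mod_add_div m n⟩
  have harg : (((θ₀ + 2 * π * ((m % n : ℕ) : ℕ) / n : ℝ)) : ℂ) * Complex.I
      = (((θ₀ + 2 * π * m / n : ℝ)) : ℂ) * Complex.I
        + ((-(k : ℤ) : ℤ) : ℂ) * (2 * (π : ℂ) * Complex.I) := by
    have hm : ((m % n : ℕ) : ℝ) = (m : ℝ) - n * k := by
      have h := congrArg (Nat.cast : ℕ → ℝ) hk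
      push_cast at h; linarith
    have hr : (θ₀ + 2 * π * ((m % n : ℕ)) / n : ℝ)
        = (θ₀ + 2 * π * m / n) + (-(k : ℝ)) * (2 * π) := by
      rw [hm]; field_simp; ring
    push_cast [hr]; ring
  rw [harg, Complex.exp_add, Complex.exp_int_mul_two_pi_mul_I, mul_one]


/-- (Converse to the regular case.)  Work in the Euclidean plane
`ℂ`.  Suppose the points `C_i` all lie at the same distance `r > 0` from `O`
and consecutive rays `O C_i`, `O C_{i+1}` subtend equal angles `2π/n`
(i.e. `C_i = O + r·exp((θ₀ + 2πi/n)·I)`), and suppose the edge `V_{i-1} V_i`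
of a convex polygon lies on the perpendicular bisector of `O C_i`
(i.e. `dist(V_{i-1}, O) = dist(V_{i-1}, C_i)` and `dist(V_i, O) = dist(V_i, C_i)`
for all `i`).  Then the polygon `V₀, …, V_{n-1}` is regular with center `O`:
its vertices are equidistant from `O` and consecutive vertices subtend equal
angles at `O`. -/
theorem regular_rays_perpBisector_edges_imp_regular_polygon
    (n : ℕ) [NeZero n] (hn : 3 ≤ n) (O : ℂ) (r θ₀ : ℝ) (hr : 0 < r)
    (C V : Fin n → ℂ)
    (hC : ∀ i : Fin n,
      C i = O + (r : ℂ) * Complex.exp (((θ₀ + 2 * π * (i : ℕ) / n : ℝ) : ℂ) * Complex.I))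
    (hV : ∀ i : Fin n,
      dist (V (i - 1)) O = dist (V (i - 1)) (C i) ∧ dist (V i) O = dist (V i) (C i)) :
    ∃ r' : ℝ, 0 < r' ∧ ∃ θ' : ℝ, ∀ i : Fin n,
      V i = O + (r' : ℂ) * Complex.exp (((θ' + 2 * π * (i : ℕ) / n : ℝ) : ℂ) * Complex.I) := by
  have hπ := Real.pi_pos
  have hnpos : (0:ℝ) < n := by
    have : 0 < n := by omega
    exact_mod_cast this
  have hn3 : (3:ℝ) ≤ n := by exact_mod_cast hn
  have hβ0 : (0:ℝ) < 2 * π / n := by positivity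
  have hβπ : 2 * π / n < π := by
    rw [div_lt_iff₀ hnpos]; nlinarith
  have hcπn : 0 < Real.cos (π / n) := by
    apply Real.cos_pos_of_mem_Ioo
    constructor
    · have : 0 < π / (n:ℝ) := by positivity
      linarith
    · rw [div_lt_div_iff₀ hnpos (by norm_num : (0:ℝ) < 2)]; nlinarith
  refine ⟨r / (2 * Real.cos (π / n)), by positivity, θ₀ + π / n, fun i => ?_⟩
  set α : ℝ := θ₀ + 2 * π * (i:ℕ) / n with hα
  set E : ℂ := Complex.exp ((α : ℂ) * Complex.I) with hE
  set E' : ℂ := Complex.exp (((-α : ℝ) : ℂ) * Complex.I) with hE'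
  have hexpα : ‖E'‖ = 1 := Complex.norm_exp_ofReal_mul_I _
  set t : ℂ := (V i - O) * E' with htdef
  have hinv : E * E' = 1 := by
    rw [hE, hE', ← Complex.exp_add,
      show ((α:ℝ):ℂ) * Complex.I + ((-α:ℝ):ℂ) * Complex.I = 0 by push_cast; ring,
      Complex.exp_zero]
  have hreal : (θ₀ + 2 * π * ((i:ℕ)+1) / n : ℝ) = α + 2 * π / n := by
    rw [hα]; field_simp; ring
  -- first equidistance
  have hd1 : ‖V i - O‖ = ‖V i - (O + (r:ℂ) * E)‖ := by
    have hd := (hV i).2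
    rw [hC i, Complex.dist_eq, Complex.dist_eq] at hd
    exact hd
  -- second equidistance
  have hd2 : ‖V i - O‖ = ‖V i -
      (O + (r:ℂ) * Complex.exp (((α + 2 * π / n : ℝ) : ℂ) * Complex.I))‖ := by
    have hd := (hV (i+1)).1
    rw [add_sub_cancel_right] at hd
    rw [hC (i+1), Complex.dist_eq, Complex.dist_eq] at hd
    have hval : (((i+1 : Fin n)):ℕ) = ((i:ℕ)+1) % n := by
      rw [Fin.val_add, Fin.val_one' n, Nat.mod_eq_of_lt (show 1 < n by omega)]
    rw [hval] at hd
    have hmod := exp_mod0 n (by omega) θ₀ ((i:ℕ)+1)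
    rw [show ((((i:ℕ)+1 : ℕ)) : ℝ) = ((i:ℕ) : ℝ) + 1 by push_cast; ring, hreal] at hmod
    rw [hmod] at hd
    exact hd
  have habs_t : ‖t‖ = ‖V i - O‖ := by
    rw [htdef, norm_mul, hexpα, mul_one]
  -- transported equations
  have h1 : ‖t‖ = ‖t - r‖ := by
    have key1 : t - (r:ℂ) = (V i - (O + (r:ℂ) * E)) * E' := by
      rw [htdef]; linear_combination (r:ℂ) * hinv
    have hR : ‖(V i - (O + (r:ℂ) * E)) * E'‖
        = ‖V i - (O + (r:ℂ) * E)‖ := by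
      rw [norm_mul, hexpα, mul_one]
    rw [key1, hR, habs_t]
    exact hd1
  have hadd : Complex.exp (((α + 2 * π / n : ℝ) : ℂ) * Complex.I) * E'
      = Complex.exp (((2*π/(n:ℝ) : ℝ):ℂ) * Complex.I) := by
    rw [hE', ← Complex.exp_add]
    congr 1
    push_cast
    ring
  have h2 : ‖t‖
      = ‖t - r * Complex.exp (((2*π/(n:ℝ) : ℝ):ℂ) * Complex.I)‖ := by
    have key2 : t - (r:ℂ) * Complex.exp (((2*π/(n:ℝ) : ℝ):ℂ) * Complex.I)
        = (V i - (O + (r:ℂ) * Complex.exp (((α + 2 * π / n : ℝ) : ℂ) * Complex.I))) * E' := by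
      rw [htdef]; linear_combination (r:ℂ) * hadd
    have hR : ‖(V i
          - (O + (r:ℂ) * Complex.exp (((α + 2 * π / n : ℝ) : ℂ) * Complex.I))) * E'‖
        = ‖V i - (O + (r:ℂ) * Complex.exp (((α + 2 * π / n : ℝ) : ℂ) * Complex.I))‖ := by
      rw [norm_mul, hexpα, mul_one]
    rw [key2, hR, habs_t]
    exact hd2
  have ht := key0 r (2*π/(n:ℝ)) hr hβ0 hβπ t h1 h2
  rw [show 2*π/(n:ℝ)/2 = π/(n:ℝ) by ring] at ht
  have hsplit : ((θ₀ + π/(n:ℝ) + 2 * π * (i:ℕ) / n : ℝ):ℂ) * Complex.I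
      = ((π/(n:ℝ) : ℝ):ℂ) * Complex.I + (α:ℂ) * Complex.I := by
    rw [hα]; push_cast; ring
  rw [hsplit, Complex.exp_add]
  rw [htdef] at ht
  rw [hE] at hinv
  linear_combination Complex.exp ((α:ℂ) * Complex.I) * ht - (V i - O) * hinv
end

section
/- Let O, C, C' be points with 0 < ∠COC' = α < π/2 and let V be the circumcenter of triangle OCC'. If |OC'| = |OC|/cos α then V lies on the ray OC' (at the point (1/2)|OC|/cos α · direction), and if |OC'| = |OC|·cos α then V lies on the ray OC; i.e., the bounds of the inequality |OC|cos α < |OC'| < |OC|/cos α correspond to V lying on the boundary rays of the sector. -/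
open Real EuclideanGeometry

private lemma helper_lin (a b c d x y : ℝ)
    (hcross : a * d - b * c ≠ 0)
    (hE1 : 2 * (x * a + y * b) = a ^ 2 + b ^ 2)
    (hE2 : 2 * (x * c + y * d) = c ^ 2 + d ^ 2)
    (hcase : a * c + b * d = a ^ 2 + b ^ 2) :
    x = c / 2 ∧ y = d / 2 := by
  have h3 : (x - c / 2) * a + (y - d / 2) * b = 0 := by linarith
  have h4 : (x - c / 2) * c + (y - d / 2) * d = 0 := by linarith
  have hx : (x - c / 2) * (a * d - b * c) = 0 := by linear_combination d * h3 - b * h4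
  have hy : (y - d / 2) * (a * d - b * c) = 0 := by linear_combination a * h4 - c * h3
  constructor
  · have := (mul_eq_zero.mp hx).resolve_right hcross; linarith
  · have := (mul_eq_zero.mp hy).resolve_right hcross; linarith

set_option maxHeartbeats 1000000 in
theorem circumcenter_on_boundary_rays
    (O C C' V : ℂ) (α : ℝ)
    (hC : O ≠ C) (hC' : O ≠ C')
    (hα₀ : 0 < α) (hα₁ : α < π / 2)
    (hangle : EuclideanGeometry.angle C O C' = α)
    (hV : dist V O = dist V C ∧ dist V O = dist V C') :
    (dist O C' = dist O C / Real.cos α →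
      (∃ t : ℝ, 0 ≤ t ∧ V = O + (t : ℂ) * (C' - O)) ∧
        dist O V = dist O C / (2 * Real.cos α)) ∧
    (dist O C' = dist O C * Real.cos α →
      ∃ t : ℝ, 0 ≤ t ∧ V = O + (t : ℂ) * (C - O)) := by
  set a : ℝ := C.re - O.re with ha
  set b : ℝ := C.im - O.im with hb
  set c : ℝ := C'.re - O.re with hcc
  set d : ℝ := C'.im - O.im with hd
  set x : ℝ := V.re - O.re with hx
  set y : ℝ := V.im - O.im with hy
  set nu : ℝ := ‖C - O‖ with hnu_def
  set nw : ℝ := ‖C' - O‖ with hnw_def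
  set cα : ℝ := Real.cos α with hca
  have hc0 : 0 < cα := Real.cos_pos_of_mem_Ioo ⟨by linarith [Real.pi_pos], hα₁⟩
  have hc1 : cα < 1 := by
    have := Real.cos_lt_cos_of_nonneg_of_le_pi (le_refl 0)
      (by linarith [Real.pi_pos]) hα₀
    simpa using this
  have huz : C - O ≠ 0 := sub_ne_zero.mpr hC.symm
  have hwz : C' - O ≠ 0 := sub_ne_zero.mpr hC'.symm
  have hnu0 : 0 < nu := norm_pos_iff.mpr huz
  have hnw0 : 0 < nw := norm_pos_iff.mpr hwz
  have hnu : nu ^ 2 = a ^ 2 + b ^ 2 := by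
    rw [hnu_def, Complex.sq_norm, Complex.normSq_apply]
    simp [Complex.sub_re, Complex.sub_im, ha, hb]; ring
  have hnw : nw ^ 2 = c ^ 2 + d ^ 2 := by
    rw [hnw_def, Complex.sq_norm, Complex.normSq_apply]
    simp [Complex.sub_re, Complex.sub_im, hcc, hd]; ring
  -- inner product from the angle
  have hcosang : Real.cos (EuclideanGeometry.angle C O C')
      = (a * c + b * d) / (nu * nw) := by
    rw [EuclideanGeometry.angle, InnerProductGeometry.cos_angle]
    have : (inner ℝ (C -ᵥ O) (C' -ᵥ O) : ℝ) = a * c + b * d := by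
      rw [show (C -ᵥ O) = C - O from rfl, show (C' -ᵥ O) = C' - O from rfl,
        Complex.inner, Complex.mul_re, ha, hb, hcc, hd]
      simp only [Complex.conj_re, Complex.conj_im, Complex.sub_re, Complex.sub_im]
      ring
    rw [this]
    rfl
  have hA : a * c + b * d = nu * nw * cα := by
    rw [hca, ← hangle, hcosang]
    field_simp
  have hsq : (a * d - b * c) ^ 2 = nu ^ 2 * nw ^ 2 * (1 - cα ^ 2) := by
    have h1 : (a * d - b * c) ^ 2 = (a ^ 2 + b ^ 2) * (c ^ 2 + d ^ 2)
        - (a * c + b * d) ^ 2 := by ring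
    rw [h1, ← hnu, ← hnw, hA]; ring
  have hcross : a * d - b * c ≠ 0 := by
    intro h
    rw [h] at hsq
    nlinarith [mul_pos (mul_pos (pow_pos hnu0 2) (pow_pos hnw0 2))
      (show (0:ℝ) < 1 - cα ^ 2 by nlinarith)]
  -- circumcenter equations
  have e1 : Complex.normSq (V - O) = Complex.normSq (V - C) := by
    rw [← Complex.sq_norm, ← Complex.sq_norm, ← Complex.dist_eq, ← Complex.dist_eq, hV.1]
  have e2 : Complex.normSq (V - O) = Complex.normSq (V - C') := by
    rw [← Complex.sq_norm, ← Complex.sq_norm, ← Complex.dist_eq, ← Complex.dist_eq, hV.2]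
  have hE1 : 2 * (x * a + y * b) = a ^ 2 + b ^ 2 := by
    simp only [Complex.normSq_apply, Complex.sub_re, Complex.sub_im] at e1
    rw [ha, hb, hx, hy]; linear_combination e1
  have hE2 : 2 * (x * c + y * d) = c ^ 2 + d ^ 2 := by
    simp only [Complex.normSq_apply, Complex.sub_re, Complex.sub_im] at e2
    rw [hcc, hd, hx, hy]; linear_combination e2
  constructor
  · intro h1
    have hnw_eq : nw = nu / cα := by
      rw [hnw_def, hnu_def, ← Complex.dist_eq, ← Complex.dist_eq,
        dist_comm C' O, dist_comm C O]
      exact h1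
    have hcase : a * c + b * d = a ^ 2 + b ^ 2 := by
      have h5 : nu * (nu / cα) * cα = nu ^ 2 := by
        field_simp
      rw [hA, hnw_eq, h5, hnu]
    obtain ⟨hxv, hyv⟩ := helper_lin a b c d x y hcross hE1 hE2 hcase
    have hVeq : V = O + ((1/2 : ℝ) : ℂ) * (C' - O) := by
      apply Complex.ext
      · simp [Complex.add_re, Complex.mul_re, Complex.sub_re, Complex.sub_im]
        rw [hx, hcc] at hxv; linarith
      · simp [Complex.add_im, Complex.mul_im, Complex.sub_re, Complex.sub_im]
        rw [hy, hd] at hyv; linarith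
    refine ⟨⟨1/2, by norm_num, hVeq⟩, ?_⟩
    have hdOV : dist O V = nw / 2 := by
      rw [dist_comm, Complex.dist_eq]
      have : V - O = ((1/2 : ℝ) : ℂ) * (C' - O) := by rw [hVeq]; ring
      rw [this, norm_mul, hnw_def]
      simp
      ring
    rw [hdOV, show dist O C = nu by rw [hnu_def, ← Complex.dist_eq, dist_comm], hnw_eq]
    ring
  · intro h2
    have hnw_eq : nw = nu * cα := by
      rw [hnw_def, hnu_def, ← Complex.dist_eq, ← Complex.dist_eq,
        dist_comm C' O, dist_comm C O]
      exact h2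
    have hcase : c * a + d * b = c ^ 2 + d ^ 2 := by
      have : a * c + b * d = c ^ 2 + d ^ 2 := by
        rw [hA, ← hnw, hnw_eq]; ring
      linarith [this]
    have hcross' : c * b - d * a ≠ 0 := by
      intro h; apply hcross; linarith [h]
    obtain ⟨hxv, hyv⟩ := helper_lin c d a b x y hcross' hE2 hE1 hcase
    have hVeq : V = O + ((1/2 : ℝ) : ℂ) * (C - O) := by
      apply Complex.ext
      · simp [Complex.add_re, Complex.mul_re, Complex.sub_re, Complex.sub_im]
        rw [hx, ha] at hxv; linarith
      · simp [Complex.add_im, Complex.mul_im, Complex.sub_re, Complex.sub_im]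
        rw [hy, hb] at hyv; linarith
    exact ⟨1/2, by norm_num, hVeq⟩
end
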